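/- The Lebesgue integral of 1/((u+v)(u+w)) over the open simplex {(u,v,w) ∈ ℝ³ : u > 0, v > 0, w > 0, u + v + w ≤ 1} equals π²/6. -/

import Mathlib

open MeasureTheory Real Set intervalIntegral
open scoped ENNReal


-- log is integrable on (0, b] for 0 < b ≤ 1
lemma integrableOn_log_Ioc {b : ℝ} (hb : 0 < b) (hb1 : b ≤ 1) :
    IntegrableOn Real.log (Ioc 0 b) volume := by
  have hrpow : IntegrableOn (fun x : ℝ => x ^ (-1/2 : ℝ)) (Ioc 0 1) volume := by
    have := (intervalIntegrable_rpow' (a := 0) (b := 1) (r := -1/2) (by norm_num))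
    simpa [intervalIntegrable_iff, uIoc_of_le (by norm_num : (0:ℝ) ≤ 1)] using this
  have hsub : IntegrableOn (fun x : ℝ => 2 * x ^ (-1/2 : ℝ)) (Ioc 0 b) volume := by
    exact IntegrableOn.mono_set (hrpow.const_mul 2) (Ioc_subset_Ioc le_rfl hb1)
  refine Integrable.mono hsub ?_ ?_
  · exact (Real.measurable_log.aestronglyMeasurable).restrict
  · filter_upwards [ae_restrict_mem measurableSet_Ioc] with x hx
    have hx0 : 0 < x := hx.1
    have hx1 : x ≤ 1 := le_trans hx.2 hb1
    have hlog : Real.log x ≤ 0 := Real.log_nonpos hx0.le hx1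
    rw [Real.norm_eq_abs, Real.norm_eq_abs, abs_of_nonpos hlog,
      abs_of_nonneg (by positivity : (0:ℝ) ≤ 2 * x ^ (-1/2 : ℝ))]
    have h1 : Real.log (x ^ (-1/2 : ℝ)) = (-1/2) * Real.log x := Real.log_rpow hx0 _
    have h2 : Real.log (x ^ (-1/2 : ℝ)) ≤ x ^ (-1/2 : ℝ) :=
      le_trans (Real.log_le_sub_one_of_pos (by positivity)) (by linarith [Real.rpow_pos_of_pos hx0 (-1/2 : ℝ), sub_le_self (x ^ (-1/2:ℝ)) one_pos.le])
    nlinarith [Real.rpow_pos_of_pos hx0 (-1/2 : ℝ)]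

lemma intervalIntegrable_log0 {b : ℝ} (hb : 0 ≤ b) (hb1 : b ≤ 1) :
    IntervalIntegrable Real.log volume 0 b := by
  rcases eq_or_lt_of_le hb with h | h
  · simp [← h]
  · rw [intervalIntegrable_iff, uIoc_of_le hb]
    exact integrableOn_log_Ioc h hb1

lemma integral_log0 {b : ℝ} (hb : 0 ≤ b) (hb1 : b ≤ 1) :
    ∫ x in (0:ℝ)..b, Real.log x = b * Real.log b - b := by
  rcases eq_or_lt_of_le hb with h | h
  · simp [← h]
  have := intervalIntegral.integral_eq_sub_of_hasDeriv_right_of_le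
    (f := fun x : ℝ => x * Real.log x - x) (f' := Real.log) hb ?_ ?_ (intervalIntegrable_log0 hb hb1)
  · rw [this]; simp
  · exact ((Real.continuous_mul_log.sub continuous_id).continuousOn)
  · intro x hx
    have := Real.hasDerivAt_mul_log (ne_of_gt hx.1)
    have : HasDerivAt (fun x : ℝ => x * Real.log x - x) (Real.log x) x := by
      have h := (Real.hasDerivAt_mul_log (ne_of_gt hx.1)).sub (hasDerivAt_id x)
      rw [add_sub_cancel_right] at h
      exact h
    exact this.hasDerivWithinAt


lemma hasSum_one_div_succ_sq : HasSum (fun n : ℕ => (1:ℝ) / ((n:ℝ)+1)^2) (π^2/6) := by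
  have h := hasSum_zeta_two
  have h2 := (hasSum_nat_add_iff (f := fun n : ℕ => (1:ℝ) / (n:ℝ)^2) 1
    (g := π^2/6)).mpr (by simpa using h)
  have : ∀ n : ℕ, (1:ℝ)/((n:ℝ)+1)^2 = (1:ℝ)/((n+1 : ℕ):ℝ)^2 := by intro n; push_cast; ring_nf
  simp_rw [this]
  exact h2

lemma hasSum_telescope : HasSum (fun n : ℕ => (1:ℝ) / (((n:ℝ)+1)*((n:ℝ)+2))) 1 := by
  have key : ∀ n : ℕ, (1:ℝ) / (((n:ℝ)+1)*((n:ℝ)+2)) = 1/((n:ℝ)+1) - 1/((n:ℝ)+2) := by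
    intro n
    have h1 : ((n:ℝ)+1) ≠ 0 := by positivity
    have h2 : ((n:ℝ)+2) ≠ 0 := by positivity
    field_simp
    ring
  have hsum : Summable (fun n : ℕ => (1:ℝ) / (((n:ℝ)+1)*((n:ℝ)+2))) := by
    apply Summable.of_nonneg_of_le (fun n => by positivity) (fun n => ?_) hasSum_one_div_succ_sq.summable
    have h1 : (0:ℝ) < (n:ℝ)+1 := by positivity
    rw [div_le_div_iff₀ (by positivity) (by positivity)]
    nlinarith
  have := hsum.hasSum
  have htend := this.tendsto_sum_nat
  have heval : ∀ N : ℕ, ∑ n ∈ Finset.range N, (1:ℝ) / (((n:ℝ)+1)*((n:ℝ)+2)) = 1 - 1/((N:ℝ)+1) := by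
    intro N
    induction N with
    | zero => simp
    | succ k ih =>
      rw [Finset.sum_range_succ, ih, key]
      push_cast
      have h1 : ((k:ℝ)+1) ≠ 0 := by positivity
      have h2 : ((k:ℝ)+2) ≠ 0 := by positivity
      field_simp
      ring
  have hlim : Filter.Tendsto (fun N : ℕ => (1:ℝ) - 1/((N:ℝ)+1)) Filter.atTop (nhds 1) := by
    have : Filter.Tendsto (fun N : ℕ => 1/((N:ℝ)+1)) Filter.atTop (nhds 0) :=
      tendsto_one_div_add_atTop_nhds_zero_nat
    simpa using (tendsto_const_nhds (x := (1:ℝ)).sub this)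
  simp_rw [heval] at htend
  have : (∑' n : ℕ, (1:ℝ) / (((n:ℝ)+1)*((n:ℝ)+2))) = 1 := tendsto_nhds_unique htend hlim
  have hs := hsum.hasSum
  rwa [this] at hs

lemma hasSum_an : HasSum (fun n : ℕ => (1:ℝ) / (((n:ℝ)+1)^2*((n:ℝ)+2))) (π^2/6 - 1) := by
  have key : ∀ n : ℕ, (1:ℝ) / (((n:ℝ)+1)^2*((n:ℝ)+2)) = 1/((n:ℝ)+1)^2 - 1/(((n:ℝ)+1)*((n:ℝ)+2)) := by
    intro n
    have h1 : ((n:ℝ)+1) ≠ 0 := by positivity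
    have h2 : ((n:ℝ)+2) ≠ 0 := by positivity
    field_simp
    ring
  simp_rw [key]
  exact hasSum_one_div_succ_sq.sub hasSum_telescope


lemma lintegral_T1 : ∫⁻ s in Ioo (0:ℝ) 1, ENNReal.ofReal (-Real.log s) = ENNReal.ofReal 1 := by
  have hint : IntegrableOn (fun s : ℝ => -Real.log s) (Ioo 0 1) volume :=
    (((integrableOn_log_Ioc one_pos le_rfl).mono_set Ioo_subset_Ioc_self).neg)
  rw [← ofReal_integral_eq_lintegral_ofReal hint ?_]
  · congr 1
    rw [← integral_Ioc_eq_integral_Ioo, ← intervalIntegral.integral_of_le (by norm_num : (0:ℝ) ≤ 1),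
      intervalIntegral.integral_neg, integral_log0 (by norm_num) le_rfl]
    norm_num
  · filter_upwards [ae_restrict_mem measurableSet_Ioo] with s hs
    simp only [Pi.zero_apply, neg_nonneg]
    exact Real.log_nonpos hs.1.le hs.2.le

lemma lintegral_term (n : ℕ) :
    ∫⁻ s in Ioo (0:ℝ) 1, ENNReal.ofReal ((s^n - s^(n+1))/((n:ℝ)+1))
      = ENNReal.ofReal ((1:ℝ) / (((n:ℝ)+1)^2*((n:ℝ)+2))) := by
  have hc : Continuous (fun s : ℝ => (s^n - s^(n+1))/((n:ℝ)+1)) := by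
    fun_prop
  have hint : IntegrableOn (fun s : ℝ => (s^n - s^(n+1))/((n:ℝ)+1)) (Ioo 0 1) volume :=
    (hc.integrableOn_Icc (a := 0) (b := 1)).mono_set Ioo_subset_Icc_self
  rw [← ofReal_integral_eq_lintegral_ofReal hint ?_]
  · congr 1
    rw [← integral_Ioc_eq_integral_Ioo, ← intervalIntegral.integral_of_le (by norm_num : (0:ℝ) ≤ 1)]
    rw [intervalIntegral.integral_div, intervalIntegral.integral_sub
      (intervalIntegral.intervalIntegrable_pow n) (intervalIntegral.intervalIntegrable_pow (n+1)),
      integral_pow, integral_pow]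
    have h1 : ((n:ℝ)+1) ≠ 0 := by positivity
    have h2 : ((n:ℝ)+2) ≠ 0 := by positivity
    push_cast
    field_simp
    ring
  · filter_upwards [ae_restrict_mem measurableSet_Ioo] with s hs
    simp only [Pi.zero_apply]
    have h := pow_le_pow_of_le_one hs.1.le hs.2.le (Nat.le_succ n)
    exact div_nonneg (sub_nonneg.mpr h) (by positivity)

lemma lintegral_T2 : ∫⁻ s in Ioo (0:ℝ) 1, ENNReal.ofReal ((1-s) * (-Real.log (1-s)) / s)
    = ENNReal.ofReal (π^2/6 - 1) := by
  have key : ∀ s ∈ Ioo (0:ℝ) 1, ENNReal.ofReal ((1-s) * (-Real.log (1-s)) / s)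
      = ∑' n : ℕ, ENNReal.ofReal ((s^n - s^(n+1))/((n:ℝ)+1)) := by
    intro s hs
    have hs0 : (0:ℝ) < s := hs.1
    have hs1 : s < 1 := hs.2
    have habs : |s| < 1 := by rw [abs_of_pos hs0]; exact hs1
    have hsum : HasSum (fun n : ℕ => s^(n+1)/((n:ℝ)+1)) (-Real.log (1-s)) :=
      Real.hasSum_pow_div_log_of_abs_lt_one habs
    have hsum2 := hsum.mul_right ((1-s)/s)
    have hterm : ∀ n : ℕ, s^(n+1)/((n:ℝ)+1) * ((1-s)/s) = (s^n - s^(n+1))/((n:ℝ)+1) := by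
      intro n
      have h1 : ((n:ℝ)+1) ≠ 0 := by positivity
      have : s^(n+1) = s^n * s := pow_succ s n
      field_simp
      ring
    simp_rw [hterm] at hsum2
    have hval : -Real.log (1-s) * ((1-s)/s) = (1-s) * (-Real.log (1-s)) / s := by ring
    rw [hval] at hsum2
    rw [← hsum2.tsum_eq]
    refine ENNReal.ofReal_tsum_of_nonneg (fun n => ?_) hsum2.summable
    have h := pow_le_pow_of_le_one hs0.le hs1.le (Nat.le_succ n)
    exact div_nonneg (sub_nonneg.mpr h) (by positivity)
  rw [setLIntegral_congr_fun measurableSet_Ioo key]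
  rw [lintegral_tsum (fun n => (Measurable.ennreal_ofReal (by fun_prop)).aemeasurable)]
  simp_rw [lintegral_term]
  rw [← ENNReal.ofReal_tsum_of_nonneg (fun n => by positivity) hasSum_an.summable,
    hasSum_an.tsum_eq]


lemma step5 {s : ℝ} (hs : s ∈ Ioo (0:ℝ) 1) :
    ∫⁻ u in Ioo 0 s, ENNReal.ofReal ((Real.log (1+u-s) - Real.log u)/s)
      = ENNReal.ofReal ((-((1-s) * Real.log (1-s)) - s * Real.log s)/s) := by
  obtain ⟨hs0, hs1⟩ := hs
  have h1s : (0:ℝ) < 1 - s := by linarith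
  have hcont : ContinuousOn (fun u : ℝ => Real.log (1+u-s)) (Icc 0 s) := by
    apply ContinuousOn.log
    · fun_prop
    · intro u hu; obtain ⟨hu0, hu1⟩ := hu; intro h; rw [← h] at h1s; linarith
  have hint : IntegrableOn (fun u : ℝ => (Real.log (1+u-s) - Real.log u)/s) (Ioo 0 s) volume :=
    ((hcont.integrableOn_Icc.mono_set Ioo_subset_Icc_self).sub
      ((integrableOn_log_Ioc hs0 hs1.le).mono_set Ioo_subset_Ioc_self)).div_const s
  rw [← ofReal_integral_eq_lintegral_ofReal hint ?_]
  · congr 1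
    rw [← integral_Ioc_eq_integral_Ioo, ← intervalIntegral.integral_of_le hs0.le,
      intervalIntegral.integral_div,
      intervalIntegral.integral_sub
        ((hcont.mono (by rw [uIcc_of_le hs0.le])).intervalIntegrable)
        (intervalIntegrable_log0 hs0.le hs1.le)]
    have harg : ∀ u : ℝ, (1:ℝ)+u-s = (1-s)+u := fun u => by ring
    simp_rw [harg]
    have hmem : (0:ℝ) ∉ uIcc (1-s) (1-s+s) := by
      rw [show (1:ℝ)-s+s = 1 by ring, uIcc_of_le (by linarith : (1:ℝ)-s ≤ 1)]
      intro h; exact absurd h.1 (by linarith)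
    rw [intervalIntegral.integral_comp_add_left Real.log (1-s), add_zero,
      integral_log, integral_log0 hs0.le hs1.le]
    rw [show (1:ℝ)-s+s = 1 by ring, Real.log_one]
    ring
  · filter_upwards [ae_restrict_mem measurableSet_Ioo] with u hu
    simp only [Pi.zero_apply]
    have h2 : Real.log u ≤ Real.log (1+u-s) := Real.log_le_log hu.1 (by linarith [hu.2])
    exact div_nonneg (by linarith) hs0.le

lemma lintegral_final :
    ∫⁻ s in Ioo (0:ℝ) 1, ENNReal.ofReal ((-((1-s) * Real.log (1-s)) - s * Real.log s)/s)
      = ENNReal.ofReal (π^2/6) := by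
  have key : ∀ s ∈ Ioo (0:ℝ) 1,
      ENNReal.ofReal ((-((1-s) * Real.log (1-s)) - s * Real.log s)/s)
        = ENNReal.ofReal ((1-s) * (-Real.log (1-s)) / s) + ENNReal.ofReal (-Real.log s) := by
    intro s hs
    obtain ⟨hs0, hs1⟩ := hs
    have ha : 0 ≤ (1-s) * (-Real.log (1-s)) / s :=
      div_nonneg (mul_nonneg (by linarith) (neg_nonneg.mpr (Real.log_nonpos (by linarith) (by linarith)))) hs0.le
    have hb : 0 ≤ -Real.log s := neg_nonneg.mpr (Real.log_nonpos hs0.le hs1.le)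
    rw [← ENNReal.ofReal_add ha hb]
    congr 1
    field_simp
    ring
  rw [setLIntegral_congr_fun measurableSet_Ioo key]
  rw [lintegral_add_right (g := fun s : ℝ => ENNReal.ofReal (-Real.log s)) _ ((Real.measurable_log.neg).ennreal_ofReal)]
  rw [lintegral_T1, lintegral_T2, ← ENNReal.ofReal_add (by nlinarith [Real.pi_gt_three]) (by norm_num)]
  norm_num

lemma swap_lemma {K : ℝ → ℝ → ℝ≥0∞} (hK : Measurable (Function.uncurry K)) :
    ∫⁻ u in Ioo (0:ℝ) 1, ∫⁻ s in Ioo u 1, K u s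
      = ∫⁻ s in Ioo (0:ℝ) 1, ∫⁻ u in Ioo 0 s, K u s := by
  have hT : MeasurableSet {p : ℝ × ℝ | 0 < p.1 ∧ p.1 < p.2 ∧ p.2 < 1} := by
    refine MeasurableSet.inter ?_ (MeasurableSet.inter ?_ ?_)
    · exact measurableSet_lt measurable_const measurable_fst
    · exact measurableSet_lt measurable_fst measurable_snd
    · exact measurableSet_lt measurable_snd measurable_const
  set T := {p : ℝ × ℝ | 0 < p.1 ∧ p.1 < p.2 ∧ p.2 < 1}
  have hInd : Measurable (T.indicator (Function.uncurry K)) := hK.indicator hT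
  have hL : ∫⁻ u in Ioo (0:ℝ) 1, ∫⁻ s in Ioo u 1, K u s
      = ∫⁻ u, ∫⁻ s, T.indicator (Function.uncurry K) (u, s) := by
    rw [← lintegral_indicator measurableSet_Ioo]
    apply lintegral_congr; intro u
    by_cases hu : u ∈ Ioo (0:ℝ) 1
    · rw [Set.indicator_of_mem hu, ← lintegral_indicator measurableSet_Ioo]
      apply lintegral_congr; intro s
      by_cases hs : s ∈ Ioo u 1
      · rw [Set.indicator_of_mem hs, Set.indicator_of_mem (show (u,s) ∈ T from ⟨hu.1, hs.1, hs.2⟩)]; rfl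
      · rw [Set.indicator_of_notMem hs, Set.indicator_of_notMem (fun h => hs ⟨h.2.1, h.2.2⟩)]
    · rw [Set.indicator_of_notMem hu]
      have : ∀ s, T.indicator (Function.uncurry K) (u, s) = 0 := fun s =>
        Set.indicator_of_notMem (fun h => hu ⟨h.1, lt_trans h.2.1 h.2.2⟩) _
      simp [this]
  have hR : ∫⁻ s in Ioo (0:ℝ) 1, ∫⁻ u in Ioo 0 s, K u s
      = ∫⁻ s, ∫⁻ u, T.indicator (Function.uncurry K) (u, s) := by
    rw [← lintegral_indicator measurableSet_Ioo]
    apply lintegral_congr; intro s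
    by_cases hs : s ∈ Ioo (0:ℝ) 1
    · rw [Set.indicator_of_mem hs, ← lintegral_indicator measurableSet_Ioo]
      apply lintegral_congr; intro u
      by_cases hu : u ∈ Ioo 0 s
      · rw [Set.indicator_of_mem hu, Set.indicator_of_mem (show (u,s) ∈ T from ⟨hu.1, hu.2, hs.2⟩)]; rfl
      · rw [Set.indicator_of_notMem hu, Set.indicator_of_notMem (fun h => hu ⟨h.1, h.2.1⟩)]
    · rw [Set.indicator_of_notMem hs]
      have : ∀ u, T.indicator (Function.uncurry K) (u, s) = 0 := fun u =>
        Set.indicator_of_notMem (fun h => hs ⟨lt_trans h.1 h.2.1, h.2.2⟩) _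
      simp [this]
  rw [hL, hR]
  exact lintegral_lintegral_swap hInd.aemeasurable

lemma step3 {u : ℝ} (G : ℝ → ℝ≥0∞) (hG : Measurable G) :
    ∫⁻ s in Ioo u 1, G (s - u) = ∫⁻ v in Ioo 0 (1-u), G v := by
  have hmp : MeasurePreserving (fun x : ℝ => x - u) volume volume :=
    measurePreserving_sub_right volume u
  have hpre : (fun x : ℝ => x - u) ⁻¹' (Ioo 0 (1-u)) = Ioo u 1 := by
    ext x; simp only [mem_preimage, mem_Ioo]
    constructor <;> intro h <;> constructor <;> linarith [h.1, h.2]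
  rw [← hpre]
  exact hmp.setLIntegral_comp_preimage measurableSet_Ioo hG

lemma step2 {u v : ℝ} (hu : 0 < u) (hv : 0 < v) (hv1 : v < 1 - u) :
    ∫⁻ w in Ioc 0 (1-u-v), ENNReal.ofReal (1/((u+v)*(u+w)))
      = ENNReal.ofReal ((Real.log (1-v) - Real.log u)/(u+v)) := by
  have hc : 0 < 1 - u - v := by linarith
  have hcont : ContinuousOn (fun w : ℝ => 1/((u+v)*(u+w))) (Icc 0 (1-u-v)) := by
    apply ContinuousOn.div continuousOn_const
    · fun_prop
    · intro w hw
      have : 0 < u + w := by linarith [hw.1]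
      positivity
  have hint : IntegrableOn (fun w : ℝ => 1/((u+v)*(u+w))) (Ioc 0 (1-u-v)) volume :=
    hcont.integrableOn_Icc.mono_set Ioc_subset_Icc_self
  rw [← ofReal_integral_eq_lintegral_ofReal hint ?_]
  · congr 1
    rw [← intervalIntegral.integral_of_le hc.le]
    have hrw : ∀ w : ℝ, 1/((u+v)*(u+w)) = (u+v)⁻¹ * (u+w)⁻¹ := by
      intro w; rw [one_div, mul_inv]
    simp_rw [hrw]
    rw [intervalIntegral.integral_const_mul]
    have := intervalIntegral.integral_comp_add_left (a := 0) (b := 1-u-v) (fun x : ℝ => x⁻¹) u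
    rw [this, add_zero]
    have h1v : u + (1-u-v) = 1 - v := by ring
    rw [h1v]
    rw [integral_inv (by rw [uIcc_of_le (by linarith : u ≤ 1-v)]; intro h; exact absurd h.1 (by linarith))]
    rw [Real.log_div (by linarith) (by linarith)]
    rw [inv_mul_eq_div]
  · filter_upwards [ae_restrict_mem measurableSet_Ioc] with w hw
    have h1 : 0 < u + v := by linarith
    have h2 : 0 < u + w := by linarith [hw.1]
    positivity

abbrev S3 : Set (ℝ × ℝ × ℝ) :=
  {p : ℝ × ℝ × ℝ | 0 < p.1 ∧ 0 < p.2.1 ∧ 0 < p.2.2 ∧ p.1 + p.2.1 + p.2.2 ≤ 1}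

lemma hS3 : MeasurableSet S3 := by
  refine MeasurableSet.inter ?_ (MeasurableSet.inter ?_ (MeasurableSet.inter ?_ ?_))
  · exact measurableSet_lt measurable_const measurable_fst
  · exact measurableSet_lt measurable_const (measurable_fst.comp measurable_snd)
  · exact measurableSet_lt measurable_const (measurable_snd.comp measurable_snd)
  · exact measurableSet_le ((measurable_fst.add (measurable_fst.comp measurable_snd)).add
      (measurable_snd.comp measurable_snd)) measurable_const

lemma step1 (g : ℝ × ℝ × ℝ → ℝ≥0∞) (hg : Measurable g) :
    ∫⁻ p in S3, g p
      = ∫⁻ u in Ioo (0:ℝ) 1, ∫⁻ v in Ioo 0 (1-u), ∫⁻ w in Ioc 0 (1-u-v), g (u, v, w) := by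
  have hInd : Measurable (S3.indicator g) := hg.indicator hS3
  rw [← lintegral_indicator hS3]
  rw [Measure.volume_eq_prod, lintegral_prod _ hInd.aemeasurable]
  have inner_eq : ∀ u : ℝ, ∫⁻ q : ℝ × ℝ, S3.indicator g (u, q)
      = ∫⁻ v, ∫⁻ w, S3.indicator g (u, v, w) := by
    intro u
    rw [Measure.volume_eq_prod]
    exact lintegral_prod (fun q => S3.indicator g (u, q))
      ((hInd.comp measurable_prodMk_left).aemeasurable)
  simp_rw [inner_eq]
  symm
  rw [← lintegral_indicator measurableSet_Ioo]
  apply lintegral_congr; intro u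
  by_cases hu : u ∈ Ioo (0:ℝ) 1
  · rw [Set.indicator_of_mem hu, ← lintegral_indicator measurableSet_Ioo]
    apply lintegral_congr; intro v
    by_cases hv : v ∈ Ioo (0:ℝ) (1-u)
    · rw [Set.indicator_of_mem hv, ← lintegral_indicator measurableSet_Ioc]
      apply lintegral_congr; intro w
      by_cases hw : w ∈ Ioc (0:ℝ) (1-u-v)
      · rw [Set.indicator_of_mem hw, Set.indicator_of_mem
          (show (u,v,w) ∈ S3 from ⟨hu.1, hv.1, hw.1, by linarith [hw.2]⟩)]
      · rw [Set.indicator_of_notMem hw, Set.indicator_of_notMem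
          (fun h => hw ⟨h.2.2.1, by linarith [h.2.2.2]⟩)]
    · rw [Set.indicator_of_notMem hv]
      have : ∀ w, S3.indicator g (u, v, w) = 0 := fun w =>
        Set.indicator_of_notMem (fun h => hv ⟨h.2.1, by linarith [h.2.2.1, h.2.2.2]⟩) _
      simp [this]
  · rw [Set.indicator_of_notMem hu]
    have : ∀ v w, S3.indicator g (u, v, w) = 0 := fun v w =>
      Set.indicator_of_notMem (fun h => hu ⟨h.1, by linarith [h.2.1, h.2.2.1, h.2.2.2]⟩) _
    simp [this]

/-- The Lebesgue integral of `1/((u+v)(u+w))` over the open simplex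
`{(u,v,w) : u > 0, v > 0, w > 0, u + v + w ≤ 1}` equals `π²/6`. -/
theorem integral_simplex_inv_uv_uw :
    ∫ p in {p : ℝ × ℝ × ℝ |
        0 < p.1 ∧ 0 < p.2.1 ∧ 0 < p.2.2 ∧ p.1 + p.2.1 + p.2.2 ≤ 1},
      1 / ((p.1 + p.2.1) * (p.1 + p.2.2)) = Real.pi ^ 2 / 6 := by
  have hfm : Measurable (fun p : ℝ × ℝ × ℝ => 1 / ((p.1 + p.2.1) * (p.1 + p.2.2))) := by
    simp only [one_div]
    exact ((measurable_fst.add (measurable_fst.comp measurable_snd)).mul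
      (measurable_fst.add (measurable_snd.comp measurable_snd))).inv
  have hnn : 0 ≤ᵐ[volume.restrict S3]
      fun p : ℝ × ℝ × ℝ => 1 / ((p.1 + p.2.1) * (p.1 + p.2.2)) := by
    refine (ae_restrict_iff' hS3).mpr (ae_of_all _ fun p hp => ?_)
    obtain ⟨h1, h2, h3, _⟩ := hp
    have ha : 0 < p.1 + p.2.1 := by linarith
    have hb : 0 < p.1 + p.2.2 := by linarith
    positivity
  rw [show {p : ℝ × ℝ × ℝ |
        0 < p.1 ∧ 0 < p.2.1 ∧ 0 < p.2.2 ∧ p.1 + p.2.1 + p.2.2 ≤ 1} = S3 from rfl]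
  rw [integral_eq_lintegral_of_nonneg_ae hnn hfm.aestronglyMeasurable.restrict]
  have key : ∫⁻ p in S3, ENNReal.ofReal (1 / ((p.1 + p.2.1) * (p.1 + p.2.2)))
      = ENNReal.ofReal (π^2/6) := by
    rw [step1 _ hfm.ennreal_ofReal]
    have e1 : ∀ u ∈ Ioo (0:ℝ) 1,
        (∫⁻ v in Ioo 0 (1-u), ∫⁻ w in Ioc 0 (1-u-v),
          ENNReal.ofReal (1 / ((u + v) * (u + w))))
        = ∫⁻ s in Ioo u 1, ENNReal.ofReal ((Real.log (1+u-s) - Real.log u)/s) := by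
      intro u hu
      rw [setLIntegral_congr_fun measurableSet_Ioo
        (fun v hv => step2 hu.1 hv.1 hv.2)]
      have hG : Measurable (fun v : ℝ => ENNReal.ofReal ((Real.log (1-v) - Real.log u)/(u+v))) := by
        refine Measurable.ennreal_ofReal ?_
        exact ((Real.measurable_log.comp (measurable_const.sub measurable_id)).sub
          measurable_const).div (measurable_const.add measurable_id)
      rw [← step3 _ hG]
      apply lintegral_congr
      intro s
      rw [show (1:ℝ) - (s - u) = 1 + u - s by ring, show u + (s - u) = s by ring]
    rw [setLIntegral_congr_fun measurableSet_Ioo e1]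
    have hK : Measurable (Function.uncurry
        (fun u s : ℝ => ENNReal.ofReal ((Real.log (1+u-s) - Real.log u)/s))) := by
      refine Measurable.ennreal_ofReal ?_
      exact ((Real.measurable_log.comp ((measurable_const.add measurable_fst).sub
        measurable_snd)).sub (Real.measurable_log.comp measurable_fst)).div measurable_snd
    rw [swap_lemma hK]
    rw [setLIntegral_congr_fun measurableSet_Ioo (fun s hs => step5 hs)]
    exact lintegral_final
  rw [key, ENNReal.toReal_ofReal (by positivity)]
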